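/- Let G be a compact Hausdorff topological group and let S ⊆ G be a nonempty closed subset that is closed under multiplication (a closed subsemigroup). Then S is closed under taking inverses; in particular S is a compact subgroup of G. -/

import Mathlib

/-- A nonempty closed subsemigroup of a compact Hausdorff topological group is closed under
taking inverses; in particular it is a compact subgroup. -/
theorem closed_subsemigroup_of_compact_group_is_subgroup
    {G : Type*} [Group G] [TopologicalSpace G] [IsTopologicalGroup G]
    [CompactSpace G] [T2Space G]
    (S : Set G) (hne : S.Nonempty) (hclosed : IsClosed S)
    (hmul : ∀ a ∈ S, ∀ b ∈ S, a * b ∈ S) :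
    (∀ a ∈ S, a⁻¹ ∈ S) ∧ IsCompact S := by
  refine ⟨?_, hclosed.isCompact⟩
  intro a ha
  -- the closed subsemigroup generated by `a`
  set T : Subsemigroup G := (Subsemigroup.closure {a}).topologicalClosure with hT
  have hTS : (T : Set G) ⊆ S := by
    have h1 : (Subsemigroup.closure {a} : Set G) ⊆ S := by
      intro x hx
      induction hx using Subsemigroup.closure_induction with
      | mem x hx => rcases hx with rfl; exact ha
      | mul x y _ _ hx hy => exact hmul x hx y hy
    calc (T : Set G) ⊆ closure S := closure_mono h1
    _ = S := hclosed.closure_eq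
  -- find an idempotent in T, which must be 1
  obtain ⟨m, hm, hmm⟩ := exists_idempotent_in_compact_subsemigroup
    (fun r => continuous_mul_right r) (T : Set G)
    ⟨a, subset_closure (Subsemigroup.mem_closure.mpr fun _ h => h rfl)⟩
    (isClosed_closure.isCompact) (fun x hx y hy => T.mul_mem hx hy)
  have hm1 : m = 1 := mul_left_cancel (by rw [hmm, mul_one])
  have h1T : (1 : G) ∈ (T : Set G) := hm1 ▸ hm
  -- now a⁻¹ = a⁻¹ * 1 lies in the closure of a⁻¹ * (closure {a}) ⊆ S
  have key : ∀ x ∈ Subsemigroup.closure ({a} : Set G), x ∈ S ∧ a⁻¹ * x ∈ S := by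
    intro x hx
    induction hx using Subsemigroup.closure_induction with
    | mem x hx =>
      rcases hx with rfl
      refine ⟨ha, ?_⟩
      rw [inv_mul_cancel]
      exact hTS h1T
    | mul x y _ _ hx hy =>
      exact ⟨hmul x hx.1 y hy.1, by rw [← mul_assoc]; exact hmul _ hx.2 y hy.1⟩
  have himg : (fun x => a⁻¹ * x) '' (Subsemigroup.closure ({a} : Set G)) ⊆ S :=
    fun x ⟨y, hy, hxy⟩ => hxy ▸ (key y hy).2
  have : a⁻¹ * 1 ∈ closure ((fun x => a⁻¹ * x) '' (Subsemigroup.closure ({a} : Set G))) := by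
    exact (image_closure_subset_closure_image (continuous_mul_left a⁻¹)) ⟨1, h1T, rfl⟩
  have : a⁻¹ * 1 ∈ S := by
    have := closure_mono himg this
    rwa [hclosed.closure_eq] at this
  rwa [mul_one] at this
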